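/- Let G be a finite median graph. Then the alternating sum over n of (-1)^n times the number of n-dimensional hypercube subgraphs of G equals 1. -/

import Mathlib

open SimpleGraph

universe u

variable {V : Type u}

/-- The geodesic interval between two vertices: the set of vertices lying on
shortest paths between them. -/
def gInterval (G : SimpleGraph V) (x y : V) : Set V :=
  {z | G.dist x z + G.dist z y = G.dist x y}

/-- A set of vertices is (geodesically) convex. -/
def GConvex (G : SimpleGraph V) (C : Set V) : Prop :=
  ∀ x ∈ C, ∀ y ∈ C, gInterval G x y ⊆ C

/-- `Wside G a b` is the set `W_ab` of vertices strictly closer to `a` than to `b`. -/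
def Wside (G : SimpleGraph V) (a b : V) : Set V :=
  {x | G.dist a x < G.dist b x}

/-- `Uside G a b` is the set `U_ab` of vertices of `W_ab` having a neighbour in `W_ba`. -/
def Uside (G : SimpleGraph V) (a b : V) : Set V :=
  {x | x ∈ Wside G a b ∧ ∃ y, G.Adj x y ∧ y ∈ Wside G b a}

/-- A graph is bipartite if it admits a proper 2-colouring. -/
def IsBipartiteGraph (G : SimpleGraph V) : Prop :=
  ∃ c : V → Bool, ∀ u v, G.Adj u v → c u ≠ c v

/-- A partial cube: a connected bipartite graph all of whose half-spaces `W_ab`, `W_ba`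
are convex (Djoković's characterization). -/
def IsPartialCube (G : SimpleGraph V) : Prop :=
  G.Connected ∧ IsBipartiteGraph G ∧
    ∀ a b, G.Adj a b → GConvex G (Wside G a b) ∧ GConvex G (Wside G b a)

/-- The Djoković–Winkler relation Θ between (unordered) edges. -/
def ThetaRel (G : SimpleGraph V) (e f : Sym2 V) : Prop :=
  ∃ x y u v : V, e = s(x, y) ∧ f = s(u, v) ∧
    G.dist x u + G.dist y v ≠ G.dist x v + G.dist y u

/-- The geodesic convex hull of a set of vertices. -/
def gConvexHull (G : SimpleGraph V) (A : Set V) : Set V :=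
  ⋂₀ {C : Set V | GConvex G C ∧ A ⊆ C}

/-- The hypercube of dimension `n`: vertices are functions `Fin n → Bool`,
adjacent iff they differ in exactly one coordinate. -/
def cubeGraph (n : ℕ) : SimpleGraph (Fin n → Bool) where
  Adj x y := ∃! i, x i ≠ y i
  symm := by
    constructor
    rintro x y ⟨i, hi, hu⟩
    exact ⟨i, hi.symm, fun j hj => hu j hj.symm⟩
  loopless := by
    constructor
    rintro x ⟨i, hi, -⟩
    exact hi rfl

/-- The number of `n`-cube subgraphs of `G` (vertex subsets inducing a graph
isomorphic to the `n`-dimensional hypercube). -/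
noncomputable def numCubes (G : SimpleGraph V) [Fintype V] (n : ℕ) : ℕ :=
  Nat.card {s : Finset V // Nonempty ((G.induce (↑s : Set V)) ≃g cubeGraph n)}

namespace MG

section Ham

def ham {n : ℕ} (x y : Fin n → Bool) : ℕ := ∑ i, if x i = y i then 0 else 1

def fflip {n : ℕ} (x : Fin n → Bool) (i : Fin n) : Fin n → Bool :=
  Function.update x i (!x i)

variable {n : ℕ}

lemma ham_comm (x y : Fin n → Bool) : ham x y = ham y x := by
  unfold ham
  refine Finset.sum_congr rfl fun i _ => ?_
  by_cases h : x i = y i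
  · simp [h]
  · rw [if_neg h, if_neg (fun h' => h h'.symm)]

lemma ham_self (x : Fin n → Bool) : ham x x = 0 := by simp [ham]

lemma ham_eq_zero {x y : Fin n → Bool} (h : ham x y = 0) : x = y := by
  funext i
  by_contra hne
  have : (if x i = y i then 0 else 1) = 1 := by simp [hne]
  have hle : 1 ≤ ham x y := by
    rw [← this]
    exact Finset.single_le_sum (f := fun i => if x i = y i then 0 else 1)
      (fun j _ => by positivity) (Finset.mem_univ i)
  omega

lemma ham_update (x y : Fin n → Bool) (i : Fin n) (b : Bool) :
    ham (Function.update x i b) y + (if x i = y i then 0 else 1)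
      = ham x y + (if b = y i then 0 else 1) := by
  unfold ham
  rw [← Finset.sum_erase_add _ _ (Finset.mem_univ i),
    ← Finset.sum_erase_add _ (fun j => if x j = y j then 0 else 1) (Finset.mem_univ i)]
  have hs : ∑ j ∈ Finset.univ.erase i, (if Function.update x i b j = y j then 0 else 1)
      = ∑ j ∈ Finset.univ.erase i, (if x j = y j then 0 else 1) := by
    refine Finset.sum_congr rfl fun j hj => ?_
    rw [Function.update_of_ne (Finset.mem_erase.mp hj).1]
  rw [hs, Function.update_self]
  omega

lemma ham_flip_ne (x y : Fin n → Bool) (i : Fin n) (h : x i ≠ y i) :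
    ham (fflip x i) y + 1 = ham x y := by
  have := ham_update x y i (!x i)
  have hb : (!x i) = y i := by
    cases hx : x i <;> cases hy : y i <;> simp_all
  rw [if_neg h, if_pos hb] at this
  unfold fflip
  omega

lemma ham_flip_eq (x y : Fin n → Bool) (i : Fin n) (h : x i = y i) :
    ham (fflip x i) y = ham x y + 1 := by
  have := ham_update x y i (!x i)
  have hb : (!x i) ≠ y i := by
    cases hx : x i <;> cases hy : y i <;> simp_all
  rw [if_pos h, if_neg hb] at this
  unfold fflip
  omega

lemma fflip_val (x : Fin n → Bool) (i : Fin n) : (fflip x i) i = !(x i) := by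
  simp [fflip]

lemma fflip_other (x : Fin n → Bool) {i j : Fin n} (h : j ≠ i) : (fflip x i) j = x j := by
  simp [fflip, Function.update_of_ne h]

lemma ham_fflip_self (x : Fin n → Bool) (i : Fin n) : ham (fflip x i) x = 1 := by
  have := ham_flip_eq x x i rfl
  rw [ham_self] at this
  omega

lemma ham_filter (x y : Fin n → Bool) :
    ham x y = (Finset.univ.filter (fun i => ¬ (x i = y i))).card := by
  rw [Finset.card_filter]
  unfold ham
  refine Finset.sum_congr rfl fun i _ => ?_
  by_cases h : x i = y i <;> simp [h]

lemma exists_diff {x y : Fin n → Bool} (h : 1 ≤ ham x y) : ∃ i, x i ≠ y i := by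
  by_contra hc
  push_neg at hc
  have : ham x y = 0 := by
    unfold ham; exact Finset.sum_eq_zero fun i _ => by simp [hc i]
  omega

lemma exists_two_diff {x y : Fin n → Bool} (h : 2 ≤ ham x y) :
    ∃ i j, i ≠ j ∧ x i ≠ y i ∧ x j ≠ y j := by
  rw [ham_filter] at h
  obtain ⟨i, hi, j, hj, hij⟩ :=
    Finset.one_lt_card.mp (by omega : 1 < (Finset.univ.filter (fun i => ¬ (x i = y i))).card)
  rw [Finset.mem_filter] at hi hj
  exact ⟨i, j, hij, hi.2, hj.2⟩

lemma ham_eq_one_iff (x y : Fin n → Bool) :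
    ham x y = 1 ↔ ∃! i, ¬ (x i = y i) := by
  rw [ham_filter, Finset.card_eq_one]
  constructor
  · rintro ⟨a, ha⟩
    refine ⟨a, ?_, fun j hj => ?_⟩
    · have : a ∈ Finset.univ.filter (fun i => ¬ (x i = y i)) := ha ▸ Finset.mem_singleton_self a
      exact (Finset.mem_filter.mp this).2
    · have : j ∈ Finset.univ.filter (fun i => ¬ (x i = y i)) :=
        Finset.mem_filter.mpr ⟨Finset.mem_univ j, hj⟩
      rw [ha, Finset.mem_singleton] at this
      exact this
  · rintro ⟨a, ha, hu⟩
    refine ⟨a, ?_⟩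
    ext j
    simp only [Finset.mem_filter, Finset.mem_univ, true_and, Finset.mem_singleton]
    exact ⟨fun hj => hu j hj, fun hj => hj ▸ ha⟩

lemma cube_adj_iff {x y : Fin n → Bool} : (cubeGraph n).Adj x y ↔ ham x y = 1 := by
  rw [ham_eq_one_iff]
  rfl

lemma eq_fflip_of_ham_eq_one {x y : Fin n → Bool} (h : ham x y = 1) :
    ∃ i, ¬ (x i = y i) ∧ x = fflip y i := by
  obtain ⟨i, hi, hu⟩ := (ham_eq_one_iff x y).mp h
  refine ⟨i, hi, funext fun j => ?_⟩
  by_cases hj : j = i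
  · subst hj
    rw [fflip_val]
    cases hx : x j <;> cases hy : y j <;> simp_all
  · rw [fflip_other y hj]
    by_contra hne
    exact hj (hu j hne)

lemma fflip_fflip (x : Fin n → Bool) (i : Fin n) : fflip (fflip x i) i = x := by
  funext j
  by_cases h : j = i
  · subst h; simp [fflip]
  · rw [fflip_other _ h, fflip_other _ h]

lemma fflip_comm (x : Fin n → Bool) {i j : Fin n} (h : i ≠ j) :
    fflip (fflip x i) j = fflip (fflip x j) i := by
  funext l
  by_cases hi : l = i
  · subst hi
    rw [fflip_other _ h, fflip_val, fflip_val, fflip_other _ h]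
  · by_cases hj : l = j
    · subst hj
      have h2 : l ≠ i := fun he => h he.symm
      rw [fflip_val, fflip_other _ h2, fflip_other _ h2, fflip_val]
    · rw [fflip_other _ hj, fflip_other _ hi, fflip_other _ hi, fflip_other _ hj]

lemma two_le_ham {x y : Fin n → Bool} {i j : Fin n} (hij : i ≠ j)
    (hi : x i ≠ y i) (hj : x j ≠ y j) : 2 ≤ ham x y := by
  rw [ham_filter]
  refine Finset.one_lt_card.mpr ⟨i, ?_, j, ?_, hij⟩ <;>
    simp [Finset.mem_filter, hi, hj]

lemma ham_cons {m : ℕ} (p q : Fin (m + 1) → Bool) :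
    ham p q = (if p 0 = q 0 then 0 else 1) + ham (Fin.tail p) (Fin.tail q) := by
  unfold ham
  rw [Fin.sum_univ_succ]
  rfl

lemma ham_nested {x y : Fin n → Bool} (h : ∀ i, y i = true → x i = true) :
    ham x y + ham y (fun _ => false) = ham x (fun _ => false) := by
  unfold ham
  rw [← Finset.sum_add_distrib]
  refine Finset.sum_congr rfl fun i _ => ?_
  cases hy : y i
  · simp [hy]
  · have hx := h i hy
    simp [hx, hy]

end Ham


variable {G : SimpleGraph V}

def Med (G : SimpleGraph V) : Prop :=
  ∀ u v w : V, ∃! m : V,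
    m ∈ gInterval G u v ∧ m ∈ gInterval G v w ∧ m ∈ gInterval G w u

lemma dc (G : SimpleGraph V) (x y : V) : G.dist x y = G.dist y x :=
  SimpleGraph.dist_comm

lemma da {x y : V} (h : G.Adj x y) : G.dist x y = 1 :=
  SimpleGraph.dist_eq_one_iff_adj.mpr h

lemma mem_gInterval {x y m : V} :
    m ∈ gInterval G x y ↔ G.dist x m + G.dist m y = G.dist x y := Iff.rfl

lemma interval_edge (hc : G.Connected) {x y : V} (h : G.Adj x y) {m : V}
    (hm : m ∈ gInterval G x y) : m = x ∨ m = y := by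
  rw [mem_gInterval, da h] at hm
  by_cases h0 : G.dist x m = 0
  · exact Or.inl ((hc.dist_eq_zero_iff.mp h0).symm)
  · exact Or.inr (hc.dist_eq_zero_iff.mp (by omega : G.dist m y = 0))

/-- The fundamental dichotomy: for an edge `x ~ y` and any reference vertex `r`,
the distances from `r` to `x` and `y` differ by exactly one. -/
lemma dicho (hc : G.Connected) (hmed : Med G) {x y : V} (h : G.Adj x y) (r : V) :
    G.dist r y = G.dist r x + 1 ∨ G.dist r x = G.dist r y + 1 := by
  obtain ⟨m, ⟨hm1, hm2, hm3⟩, -⟩ := hmed r x y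
  rcases interval_edge hc h hm2 with rfl | rfl
  · left
    rw [mem_gInterval, da h.symm] at hm3
    rw [dc G y r, dc G r m] at *
    omega
  · right
    rw [mem_gInterval, da h.symm] at hm1
    omega

/-- From any vertex at positive distance from `z` there is a neighbour strictly closer. -/
lemma downstep (hc : G.Connected) {z u : V} (h : G.dist z u ≠ 0) :
    ∃ p, G.Adj u p ∧ G.dist z p + 1 = G.dist z u := by
  obtain ⟨w, hw⟩ := (hc u z).exists_walk_length_eq_dist
  cases w with
  | nil => simp [SimpleGraph.dist_self] at h
  | cons hadj w' =>
    rename_i b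
    refine ⟨b, hadj, ?_⟩
    have h1 : G.dist u z ≤ G.dist u b + G.dist b z := hc.dist_triangle
    have h2 : G.dist b z ≤ w'.length := SimpleGraph.dist_le w'
    have h3 : G.dist u b = 1 := da hadj
    have h4 : G.dist u z = w'.length + 1 := by
      rw [← hw]; simp [SimpleGraph.Walk.length_cons]
    rw [dc G z b, dc G z u]
    omega


variable (hc : G.Connected) (hmed : Med G) (z : V)
include hc hmed

/-- Two distinct downward neighbours of a vertex are at distance 2. -/
lemma quad_dist2 {u p q : V} (hp : G.Adj u p) (hq : G.Adj u q) (hne : p ≠ q)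
    (hdp : G.dist z p + 1 = G.dist z u) (hdq : G.dist z q + 1 = G.dist z u) :
    G.dist p q = 2 := by
  have h2 : G.dist p q ≤ 2 := by
    have := hc.dist_triangle (u := p) (v := u) (w := q)
    rw [dc G p u, da hp, da hq] at this; omega
  have h0 : G.dist p q ≠ 0 := fun h => hne (hc.dist_eq_zero_iff.mp h)
  have h1 : G.dist p q ≠ 1 := by
    intro h1
    rcases dicho hc hmed (SimpleGraph.dist_eq_one_iff_adj.mp h1) z with h | h <;> omega
  omega

/-- Uniqueness of the common lower neighbour in a quadrangle. -/
lemma quad_unique {u p q m m' : V} (hp : G.Adj u p) (hq : G.Adj u q) (hne : p ≠ q)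
    (hdp : G.dist z p + 1 = G.dist z u) (hdq : G.dist z q + 1 = G.dist z u)
    (hm : G.Adj p m ∧ G.Adj q m ∧ G.dist z m + 1 = G.dist z p)
    (hm' : G.Adj p m' ∧ G.Adj q m' ∧ G.dist z m' + 1 = G.dist z p) :
    m = m' := by
  have hpq := quad_dist2 hc hmed z hp hq hne hdp hdq
  have key : ∀ x : V, G.Adj p x → G.Adj q x → G.dist z x + 1 = G.dist z p →
      x ∈ gInterval G z p ∧ x ∈ gInterval G p q ∧ x ∈ gInterval G q z := by
    intro x h1 h2 h3
    refine ⟨?_, ?_, ?_⟩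
    · rw [mem_gInterval, dc G x p, da h1]; omega
    · rw [mem_gInterval, da h1, dc G x q, da h2, hpq]
    · rw [mem_gInterval, da h2, dc G x z, dc G q z]; omega
  exact ((hmed z p q).unique (key m hm.1 hm.2.1 hm.2.2) (key m' hm'.1 hm'.2.1 hm'.2.2))

/-- Existence of the common lower neighbour in a quadrangle. -/
lemma quad_exists {u p q : V} (hp : G.Adj u p) (hq : G.Adj u q) (hne : p ≠ q)
    (hdp : G.dist z p + 1 = G.dist z u) (hdq : G.dist z q + 1 = G.dist z u) :
    ∃ m, G.Adj p m ∧ G.Adj q m ∧ G.dist z m + 1 = G.dist z p := by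
  have hpq := quad_dist2 hc hmed z hp hq hne hdp hdq
  obtain ⟨m, ⟨hm1, hm2, hm3⟩, -⟩ := hmed z p q
  rw [mem_gInterval] at hm1 hm2 hm3
  rw [hpq] at hm2
  have c1 : G.dist m p = G.dist p m := dc G m p
  have c2 : G.dist q m = G.dist m q := dc G q m
  have c3 : G.dist m z = G.dist z m := dc G m z
  have c4 : G.dist q z = G.dist z q := dc G q z
  have hq' : G.dist z q = G.dist z p := by omega
  have e1 : G.dist p m ≠ 0 := by
    intro h
    have he : p = m := hc.dist_eq_zero_iff.mp h
    subst he
    have hs : G.dist p p = 0 := SimpleGraph.dist_self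
    omega
  have e2 : G.dist m q ≠ 0 := by
    intro h
    have he : m = q := hc.dist_eq_zero_iff.mp h
    subst he
    omega
  refine ⟨m, SimpleGraph.dist_eq_one_iff_adj.mp (by omega : G.dist p m = 1),
    (SimpleGraph.dist_eq_one_iff_adj.mp (by omega : G.dist q m = 1)),
    by omega⟩

/-- Two distinct vertices with a common neighbour whose `z`-levels do not differ by one
are at distance exactly 2. -/
lemma dist2' {c p q : V} (h1 : G.Adj c p) (h2 : G.Adj c q) (hne : p ≠ q)
    (hl1 : G.dist z p ≠ G.dist z q + 1) (hl2 : G.dist z q ≠ G.dist z p + 1) :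
    G.dist p q = 2 := by
  have ht : G.dist p q ≤ 2 := by
    have := hc.dist_triangle (u := p) (v := c) (w := q)
    rw [dc G p c, da h1, da h2] at this; omega
  have h0 : G.dist p q ≠ 0 := fun h => hne (hc.dist_eq_zero_iff.mp h)
  have h1' : G.dist p q ≠ 1 := by
    intro h'
    rcases dicho hc hmed (SimpleGraph.dist_eq_one_iff_adj.mp h') z with h'' | h'' <;> omega
  omega

/-- In a quadrangle, a locally maximal corner forces the opposite corner two levels down. -/
lemma sq_mod_max {x a b y : V} (hxa : G.Adj x a) (hxb : G.Adj x b)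
    (hya : G.Adj a y) (hyb : G.Adj b y) (hab : a ≠ b) (hxy : x ≠ y)
    (hda : G.dist z a + 1 = G.dist z x) (hdb : G.dist z b + 1 = G.dist z x) :
    G.dist z y + 2 = G.dist z x := by
  obtain ⟨m, hm1, hm2, hm3⟩ := quad_exists hc hmed z hxa hxb hab hda hdb
  rcases dicho hc hmed hya z with h | h
  · -- y is above a : contradiction via two medians of (x, y, m)
    exfalso
    have hxy2 : G.dist x y = 2 :=
      dist2' hc hmed z hxa.symm hya hxy (by omega) (by omega)
    have hxm2 : G.dist x m = 2 :=
      dist2' hc hmed z hxa.symm hm1 (fun hx => by subst hx; omega) (by omega) (by omega)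
    have hym2 : G.dist y m = 2 :=
      dist2' hc hmed z hya hm1 (fun hx => by subst hx; omega) (by omega) (by omega)
    have key : ∀ c : V, G.Adj x c → G.Adj c y → G.Adj c m →
        c ∈ gInterval G x y ∧ c ∈ gInterval G y m ∧ c ∈ gInterval G m x := by
      intro c h1 h2 h3
      refine ⟨?_, ?_, ?_⟩
      · rw [mem_gInterval, da h1, da h2, hxy2]
      · rw [mem_gInterval, da h2.symm, da h3, hym2]
      · rw [mem_gInterval, da h3.symm, da h1.symm, dc G m x, hxm2]
    exact hab ((hmed x y m).unique (key a hxa hya hm1) (key b hxb hyb hm2))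
  · -- y is below a: then y is the quadrangle point m
    have : y = m :=
      quad_unique hc hmed z hxa hxb hab hda hdb
        ⟨hya, hyb, by omega⟩ ⟨hm1, hm2, hm3⟩
    omega

/-- Square modularity of distance-to-`z` on 4-cycles. -/
lemma sq_mod {x a y b : V} (hxa : G.Adj x a) (hay : G.Adj a y) (hyb : G.Adj y b)
    (hbx : G.Adj b x) (hxy : x ≠ y) (hab : a ≠ b) :
    G.dist z x + G.dist z y = G.dist z a + G.dist z b := by
  rcases dicho hc hmed hxa z with h1 | h1 <;>
  rcases dicho hc hmed hay z with h2 | h2 <;>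
  rcases dicho hc hmed hyb z with h3 | h3 <;>
  rcases dicho hc hmed hbx z with h4 | h4 <;>
  first
  | omega
  | (have := sq_mod_max hc hmed z hxa hbx.symm hay hyb.symm hab hxy (by omega) (by omega);
     omega)
  | (have := sq_mod_max hc hmed z hxa.symm hay hbx.symm hyb hxy hab (by omega) (by omega);
     omega)
  | (have := sq_mod_max hc hmed z hay.symm hyb hxa.symm hbx hab hxy.symm (by omega) (by omega);
     omega)
  | (have := sq_mod_max hc hmed z hyb.symm hbx hay.symm hxa hxy.symm hab.symm (by omega) (by omega);
     omega)


/-- Main construction: a family of downward neighbours of `u` spans a cube below `u`. -/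
lemma build : ∀ {n : ℕ} (u : V) (e : Fin n → V), Function.Injective e →
    (∀ i, G.Adj u (e i) ∧ G.dist z (e i) + 1 = G.dist z u) →
    ∃ F : (Fin n → Bool) → V,
      (F (fun _ => false) = u) ∧
      (∀ i, F (fflip (fun _ => false) i) = e i) ∧
      (∀ x, G.dist z (F x) + ham x (fun _ => false) = G.dist z u) ∧
      (∀ x y, G.dist (F x) (F y) = ham x y) := by
  intro n
  induction n with
  | zero =>
    intro u e _ _
    have hham : ∀ x y : Fin 0 → Bool, ham x y = 0 := fun x y => by simp [ham]
    exact ⟨fun _ => u, rfl, fun i => i.elim0, fun x => by rw [hham]; rfl,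
      fun x y => by rw [hham, SimpleGraph.dist_self]⟩
  | succ n IH =>
    intro u e einj he
    obtain ⟨F', h0, hE, hlev, hiso⟩ := IH u (fun i => e i.succ)
      (fun i j hij => Fin.succ_injective _ (einj hij))
      (fun i => he i.succ)
    have hwadj : G.Adj u (e 0) := (he 0).1
    have hwlev : G.dist z (e 0) + 1 = G.dist z u := (he 0).2
    -- distance from the F'-cube to the new direction w = e 0
    have C1 : ∀ t (x : Fin n → Bool), ham x (fun _ => false) = t →
        G.dist (F' x) (e 0) = t + 1 := by
      intro t
      induction t using Nat.strong_induction_on with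
      | _ t IH1 =>
        intro x hx
        match t, hx with
        | 0, hx =>
          have hx0 : x = fun _ => false := ham_eq_zero hx
          subst hx0
          rw [h0, da hwadj]
        | 1, hx =>
          obtain ⟨i, -, hxe⟩ := eq_fflip_of_ham_eq_one hx
          have hxa : F' x = e i.succ := by rw [hxe, hE]
          rw [hxa]
          refine dist2' hc hmed z (he i.succ).1 hwadj
            (fun hq => Fin.succ_ne_zero i (einj hq)) ?_ ?_
          · have := (he i.succ).2; omega
          · have := (he i.succ).2; omega
        | (r+2), hx =>
          obtain ⟨i, j, hij, hi, hj⟩ := exists_two_diff (x := x) (y := fun _ => false) (by omega)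
          have e1 : ham (fflip x i) (fun _ => false) = r + 1 := by
            have := ham_flip_ne x (fun _ => false) i hi; omega
          have e2 : ham (fflip x j) (fun _ => false) = r + 1 := by
            have := ham_flip_ne x (fun _ => false) j hj; omega
          have hj' : (fflip x i) j = x j := fflip_other x (fun hl => hij hl.symm)
          have e12 : ham (fflip (fflip x i) j) (fun _ => false) = r := by
            have := ham_flip_ne (fflip x i) (fun _ => false) j (by rw [hj']; exact hj)
            omega
          have d1 : G.dist (F' (fflip x i)) (e 0) = r + 2 := IH1 (r+1) (by omega) _ e1
          have d2 : G.dist (F' (fflip x j)) (e 0) = r + 2 := IH1 (r+1) (by omega) _ e2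
          have d12 : G.dist (F' (fflip (fflip x i) j)) (e 0) = r + 1 := IH1 r (by omega) _ e12
          have hxx1 : G.dist (F' (fflip x i)) (F' x) = 1 := by
            rw [hiso]; exact ham_fflip_self x i
          have hadj1 : G.Adj (F' (fflip x i)) (F' x) := SimpleGraph.dist_eq_one_iff_adj.mp hxx1
          have cw1 : G.dist (e 0) (F' (fflip x i)) = G.dist (F' (fflip x i)) (e 0) :=
            dc G _ _
          have cwx : G.dist (e 0) (F' x) = G.dist (F' x) (e 0) := dc G _ _
          rcases dicho hc hmed hadj1 (e 0) with hgood | hbad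
          · omega
          · exfalso
            have hxx2 : G.dist (F' (fflip x j)) (F' x) = 1 := by
              rw [hiso]; exact ham_fflip_self x j
            have h1x12 : G.dist (F' (fflip (fflip x i) j)) (F' (fflip x i)) = 1 := by
              rw [hiso]; exact ham_fflip_self (fflip x i) j
            have h2x12 : G.dist (F' (fflip (fflip x i) j)) (F' (fflip x j)) = 1 := by
              rw [hiso, fflip_comm x hij]
              exact ham_fflip_self (fflip x j) i
            have h12' : G.dist (F' (fflip x i)) (F' (fflip x j)) = 2 := by
              rw [hiso]
              have hyi : x i = (fflip x j) i := (fflip_other x hij).symm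
              have ha := ham_flip_eq x (fflip x j) i hyi
              have hb := ham_fflip_self x j
              have hcc := ham_comm x (fflip x j)
              omega
            have hxx12 : G.dist (F' x) (F' (fflip (fflip x i) j)) = 2 := by
              rw [hiso]
              have ha := ham_flip_eq (fflip x i) x j hj'
              have hb := ham_fflip_self x i
              have hcc := ham_comm x (fflip (fflip x i) j)
              omega
            -- two medians of (e 0, F' (fflip x i), F' (fflip x j))
            have c1 : G.dist (F' x) (F' (fflip x i)) = 1 := by rw [dc G _ _]; exact hxx1
            have c2 : G.dist (F' x) (F' (fflip x j)) = 1 := by rw [dc G _ _]; exact hxx2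
            have c3 : G.dist (F' (fflip (fflip x i) j)) (e 0)
                = G.dist (e 0) (F' (fflip (fflip x i) j)) := dc G _ _
            have c4 : G.dist (F' (fflip x j)) (F' x)
                = G.dist (F' x) (F' (fflip x j)) := dc G _ _
            have c5 : G.dist (F' (fflip x j)) (F' (fflip (fflip x i) j))
                = G.dist (F' (fflip (fflip x i) j)) (F' (fflip x j)) := dc G _ _
            have c6 : G.dist (F' (fflip x i)) (F' (fflip (fflip x i) j))
                = G.dist (F' (fflip (fflip x i) j)) (F' (fflip x i)) := dc G _ _
            have c7 : G.dist (F' (fflip x j)) (e 0)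
                = G.dist (e 0) (F' (fflip x j)) := dc G _ _
            have heq : F' x = F' (fflip (fflip x i) j) := by
              refine (hmed (e 0) (F' (fflip x i)) (F' (fflip x j))).unique
                ⟨?_, ?_, ?_⟩ ⟨?_, ?_, ?_⟩ <;> rw [mem_gInterval] <;> omega
            rw [heq, SimpleGraph.dist_self] at hxx12
            omega
    -- the shifted copy: medians towards w
    obtain ⟨M, hM⟩ : ∃ M : (Fin n → Bool) → V, ∀ x : Fin n → Bool,
        (M x ∈ gInterval G z (F' x) ∧ M x ∈ gInterval G (F' x) (e 0) ∧
          M x ∈ gInterval G (e 0) z) ∧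
        ∀ y, (y ∈ gInterval G z (F' x) ∧ y ∈ gInterval G (F' x) (e 0) ∧
          y ∈ gInterval G (e 0) z) → y = M x :=
      ⟨fun x => (hmed z (F' x) (e 0)).choose, fun x => (hmed z (F' x) (e 0)).choose_spec⟩
    have CM : ∀ x : Fin n → Bool,
        G.dist z (M x) + (ham x (fun _ => false) + 1) = G.dist z u ∧
        G.dist (F' x) (M x) = 1 ∧ G.dist (M x) (e 0) = ham x (fun _ => false) := by
      intro x
      obtain ⟨⟨m1, m2, m3⟩, -⟩ := hM x
      rw [mem_gInterval] at m1 m2 m3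
      have hC1 := C1 (ham x (fun _ => false)) x rfl
      have hl := hlev x
      have cc1 : G.dist (M x) z = G.dist z (M x) := dc G _ _
      have cc2 : G.dist (M x) (F' x) = G.dist (F' x) (M x) := dc G _ _
      have cc3 : G.dist (e 0) z = G.dist z (e 0) := dc G _ _
      have cc4 : G.dist (e 0) (M x) = G.dist (M x) (e 0) := dc G _ _
      refine ⟨by omega, by omega, by omega⟩
    have Q4 : ∀ δ (x y : Fin n → Bool), ham x y = δ →
        G.dist (M x) (F' y) = δ + 1 := by
      intro δ
      induction δ using Nat.strong_induction_on with
      | _ δ IH4 =>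
        intro x y hxy
        match δ, hxy with
        | 0, hxy =>
          have hx0 : x = y := ham_eq_zero hxy
          subst hx0
          have := (CM x).2.1
          have := dc G (M x) (F' x)
          omega
        | (δ' + 1), hxy =>
          have hadjx : G.Adj (F' x) (M x) := SimpleGraph.dist_eq_one_iff_adj.mp (CM x).2.1
          have hyx : G.dist (F' y) (F' x) = δ' + 1 := by
            rw [hiso]
            have := ham_comm x y
            omega
          have ccm : G.dist (F' y) (M x) = G.dist (M x) (F' y) := dc G _ _
          rcases dicho hc hmed hadjx (F' y) with hgood | hbad
          · omega
          · exfalso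
            by_cases hA : ∀ i, y i = true → x i = true
            · have hn := ham_nested hA
              have htr : G.dist z (F' y) ≤ G.dist z (M x) + G.dist (M x) (F' y) :=
                hc.dist_triangle
              have hly := hlev y
              have hcm := (CM x).1
              omega
            · by_cases hB : ∀ i, x i = true → y i = true
              · have hn := ham_nested hB
                have htr : G.dist (e 0) (F' y) ≤ G.dist (e 0) (M x) + G.dist (M x) (F' y) :=
                  hc.dist_triangle
                have hwy := C1 (ham y (fun _ => false)) y rfl
                have hcm := (CM x).2.2
                have cc5 : G.dist (e 0) (F' y) = G.dist (F' y) (e 0) := dc G _ _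
                have cc6 : G.dist (e 0) (M x) = G.dist (M x) (e 0) := dc G _ _
                have hcmm := ham_comm x y
                omega
              · push_neg at hA hB
                obtain ⟨b, hb1, hb2⟩ := hA
                obtain ⟨a, ha1, ha2⟩ := hB
                replace ha2 : y a = false := Bool.eq_false_iff.mpr ha2
                replace hb2 : x b = false := Bool.eq_false_iff.mpr hb2
                have hab : a ≠ b := by rintro rfl; rw [ha1] at hb2; exact Bool.noConfusion hb2
                have hda : y a ≠ x a := by rw [ha1, ha2]; exact Bool.noConfusion
                have hdb : y b ≠ x b := by rw [hb1, hb2]; exact Bool.noConfusion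
                have h2h : 2 ≤ ham x y :=
                  two_le_ham hab (fun h => hda h.symm) (fun h => hdb h.symm)
                obtain ⟨δ'', rfl⟩ : ∃ d, δ' = d + 1 := ⟨δ' - 1, by omega⟩
                -- hamming values of flipped points
                have hcxy := ham_comm x y
                have f1 : ham x (fflip y a) = δ'' + 1 := by
                  have := ham_flip_ne y x a hda
                  have := ham_comm x (fflip y a)
                  omega
                have f2 : ham x (fflip y b) = δ'' + 1 := by
                  have := ham_flip_ne y x b hdb
                  have := ham_comm x (fflip y b)
                  omega
                have hba : (fflip y a) b = y b := fflip_other y (fun h => hab h.symm)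
                have f12 : ham x (fflip (fflip y a) b) = δ'' := by
                  have := ham_flip_ne (fflip y a) x b (by rw [hba]; exact hdb)
                  have := ham_flip_ne y x a hda
                  have := ham_comm x (fflip (fflip y a) b)
                  omega
                have D1 : G.dist (M x) (F' (fflip y a)) = δ'' + 2 :=
                  IH4 (δ'' + 1) (by omega) x _ f1
                have D2 : G.dist (M x) (F' (fflip y b)) = δ'' + 2 :=
                  IH4 (δ'' + 1) (by omega) x _ f2
                have D12 : G.dist (M x) (F' (fflip (fflip y a) b)) = δ'' + 1 :=
                  IH4 δ'' (by omega) x _ f12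
                -- cube edge distances
                have E1 : G.dist (F' y) (F' (fflip y a)) = 1 := by
                  rw [hiso]
                  have := ham_fflip_self y a
                  have := ham_comm y (fflip y a)
                  omega
                have E2 : G.dist (F' y) (F' (fflip y b)) = 1 := by
                  rw [hiso]
                  have := ham_fflip_self y b
                  have := ham_comm y (fflip y b)
                  omega
                have E3 : G.dist (F' (fflip (fflip y a) b)) (F' (fflip y a)) = 1 := by
                  rw [hiso]
                  exact ham_fflip_self (fflip y a) b
                have E4 : G.dist (F' (fflip (fflip y a) b)) (F' (fflip y b)) = 1 := by
                  rw [hiso, fflip_comm y hab]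
                  exact ham_fflip_self (fflip y b) a
                have E5 : G.dist (F' (fflip y a)) (F' (fflip y b)) = 2 := by
                  rw [hiso]
                  have hyi : y a = (fflip y b) a := (fflip_other y hab).symm
                  have := ham_flip_eq y (fflip y b) a hyi
                  have := ham_fflip_self y b
                  have := ham_comm y (fflip y b)
                  omega
                have E6 : G.dist (F' y) (F' (fflip (fflip y a) b)) = 2 := by
                  rw [hiso]
                  have := ham_flip_eq (fflip y a) y b hba
                  have := ham_fflip_self y a
                  have := ham_comm y (fflip (fflip y a) b)
                  omega
                -- comm facts for the two-median argument
                have K1 : G.dist (F' (fflip y a)) (F' y) = G.dist (F' y) (F' (fflip y a)) :=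
                  dc G _ _
                have K2 : G.dist (F' (fflip y b)) (F' y) = G.dist (F' y) (F' (fflip y b)) :=
                  dc G _ _
                have K3 : G.dist (F' (fflip y a)) (F' (fflip (fflip y a) b))
                    = G.dist (F' (fflip (fflip y a) b)) (F' (fflip y a)) := dc G _ _
                have K4 : G.dist (F' (fflip y b)) (F' (fflip (fflip y a) b))
                    = G.dist (F' (fflip (fflip y a) b)) (F' (fflip y b)) := dc G _ _
                have K5 : G.dist (F' (fflip y b)) (M x)
                    = G.dist (M x) (F' (fflip y b)) := dc G _ _
                have K6 : G.dist (F' y) (M x) = G.dist (M x) (F' y) := dc G _ _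
                have K7 : G.dist (F' (fflip (fflip y a) b)) (M x)
                    = G.dist (M x) (F' (fflip (fflip y a) b)) := dc G _ _
                have heq : F' y = F' (fflip (fflip y a) b) := by
                  refine (hmed (M x) (F' (fflip y a)) (F' (fflip y b))).unique
                    ⟨?_, ?_, ?_⟩ ⟨?_, ?_, ?_⟩ <;> rw [mem_gInterval] <;> omega
                rw [heq, SimpleGraph.dist_self] at E6
                omega
    have Madj : ∀ (x : Fin n → Bool) (i : Fin n), x i = false →
        G.dist (M x) (M (fflip x i)) = 1 := by
      intro x i hxi
      have hadjx : G.Adj (F' x) (M x) := SimpleGraph.dist_eq_one_iff_adj.mp (CM x).2.1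
      have hflev : ham (fflip x i) (fun _ => false) = ham x (fun _ => false) + 1 :=
        ham_flip_eq x (fun _ => false) i hxi
      have hfx : G.dist (F' x) (F' (fflip x i)) = 1 := by
        rw [hiso]
        have := ham_fflip_self x i
        have := ham_comm x (fflip x i)
        omega
      have hadjf : G.Adj (F' x) (F' (fflip x i)) := SimpleGraph.dist_eq_one_iff_adj.mp hfx
      have hCf := C1 (ham (fflip x i) (fun _ => false)) (fflip x i) rfl
      have hcm2 := (CM x).2.2
      have hne : M x ≠ F' (fflip x i) := by
        intro hq
        rw [hq] at hcm2
        omega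
      have hcm1 := (CM x).1
      have hlx := hlev x
      have hlf := hlev (fflip x i)
      obtain ⟨q, hq1, hq2, hq3⟩ := quad_exists hc hmed z hadjx hadjf hne
        (by omega) (by omega)
      -- q is the median of (z, F' (fflip x i), e 0)
      have hq2' : G.dist (F' (fflip x i)) q = 1 := da hq2
      have hq1' : G.dist (M x) q = 1 := da hq1
      have t1 : G.dist q (e 0) ≤ G.dist q (M x) + G.dist (M x) (e 0) := hc.dist_triangle
      have t2 : G.dist z (e 0) ≤ G.dist z q + G.dist q (e 0) := hc.dist_triangle
      have cq1 : G.dist q (M x) = G.dist (M x) q := dc G _ _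
      have cq2 : G.dist q (F' (fflip x i)) = G.dist (F' (fflip x i)) q := dc G _ _
      have cq3 : G.dist q z = G.dist z q := dc G _ _
      have cq4 : G.dist (e 0) q = G.dist q (e 0) := dc G _ _
      have cq5 : G.dist (e 0) z = G.dist z (e 0) := dc G _ _
      have heq : q = M (fflip x i) := by
        refine (hM (fflip x i)).2 q ⟨?_, ?_, ?_⟩ <;> rw [mem_gInterval] <;> omega
      rw [← heq]
      exact hq1'
    have Mle : ∀ t (x y : Fin n → Bool), ham x y = t → G.dist (M x) (M y) ≤ t := by
      intro t
      induction t with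
      | zero =>
        intro x y hxy
        have hx0 : x = y := ham_eq_zero hxy
        subst hx0
        rw [SimpleGraph.dist_self]
      | succ t IHt =>
        intro x y hxy
        obtain ⟨i, hi⟩ := exists_diff (x := x) (y := y) (by omega)
        have hstep : G.dist (M (fflip y i)) (M y) = 1 := by
          cases hyi : y i with
          | false =>
            have := Madj y i hyi
            rw [dc G _ _]
            exact this
          | true =>
            have hvi : (fflip y i) i = false := by rw [fflip_val, hyi]; rfl
            have := Madj (fflip y i) i hvi
            rw [fflip_fflip] at this
            exact this
        have hh : ham x (fflip y i) = t := by
          have := ham_flip_ne y x i (fun h => hi h.symm)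
          have := ham_comm x (fflip y i)
          have := ham_comm x y
          omega
        have := IHt x (fflip y i) hh
        have htr : G.dist (M x) (M y) ≤ G.dist (M x) (M (fflip y i))
            + G.dist (M (fflip y i)) (M y) := hc.dist_triangle
        omega
    have Q3 : ∀ (x y : Fin n → Bool), G.dist (M x) (M y) = ham x y := by
      intro x y
      have hadjy : G.Adj (F' y) (M y) := SimpleGraph.dist_eq_one_iff_adj.mp (CM y).2.1
      have hq4 := Q4 (ham x y) x y rfl
      have hle := Mle (ham x y) x y rfl
      have cc : G.dist (M x) (F' y) = G.dist (F' y) (M x) := dc G _ _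
      have cm : G.dist (M x) (M y) = G.dist (M y) (M x) := dc G _ _
      rcases dicho hc hmed hadjy (M x) with h | h <;> omega
    have M0 : M (fun _ => false) = e 0 := by
      have hd1 := da hwadj
      have hd2 : G.dist (e 0) u = G.dist u (e 0) := dc G _ _
      have hd3 : G.dist (e 0) (e 0) = 0 := SimpleGraph.dist_self
      refine ((hM (fun _ => false)).2 (e 0) ⟨?_, ?_, ?_⟩).symm <;>
        rw [mem_gInterval] <;> try rw [h0]
      all_goals omega
    -- assemble
    have htz : Fin.tail (fun _ : Fin (n + 1) => false) = (fun _ : Fin n => false) := rfl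
    refine ⟨fun p => if p 0 then M (Fin.tail p) else F' (Fin.tail p), ?_, ?_, ?_, ?_⟩
    · simpa [htz] using h0
    · intro i
      refine Fin.cases ?_ ?_ i
      · have ht : Fin.tail (fflip (fun _ => false) (0 : Fin (n + 1)))
            = (fun _ : Fin n => false) := by
          funext l
          show fflip (fun _ => false) 0 l.succ = false
          rw [fflip_other _ (Fin.succ_ne_zero l)]
        have hv : (fflip (fun _ => false) (0 : Fin (n + 1))) 0 = true := by
          rw [fflip_val]; rfl
        simp only [hv, if_true, ht, M0]
      · intro j
        have hv : (fflip (fun _ => false) j.succ) 0 = false := by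
          rw [fflip_other _ (fun h => Fin.succ_ne_zero j h.symm)]
        have ht : Fin.tail (fflip (fun _ => false) j.succ)
            = fflip (fun _ : Fin n => false) j := by
          funext l
          show fflip (fun _ => false) j.succ l.succ = fflip (fun _ => false) j l
          by_cases hl : l = j
          · subst hl; rw [fflip_val, fflip_val]
          · rw [fflip_other _ (fun hq => hl (Fin.succ_injective _ hq)),
              fflip_other _ hl]
        simp only [hv, ht, Bool.false_eq_true, if_false]
        exact hE j
    · intro p
      have hhc := ham_cons p (fun _ => false)
      beta_reduce
      cases hp : p 0 with
      | false =>
        rw [hp, if_pos rfl] at hhc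
        rw [if_neg Bool.false_ne_true]
        rw [htz] at hhc
        have := hlev (Fin.tail p)
        omega
      | true =>
        rw [hp, if_neg (fun h => Bool.noConfusion h : (true : Bool) ≠ false)] at hhc
        rw [if_pos rfl]
        rw [htz] at hhc
        have := (CM (Fin.tail p)).1
        omega
    · intro p q
      have hhc := ham_cons p q
      beta_reduce
      cases hp : p 0 with
      | false =>
        cases hq : q 0 with
        | false =>
          rw [hp, hq, if_pos rfl] at hhc
          rw [if_neg Bool.false_ne_true, if_neg Bool.false_ne_true, hiso]
          omega
        | true =>
          rw [hp, hq, if_neg Bool.false_ne_true] at hhc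
          rw [if_neg Bool.false_ne_true, if_pos rfl]
          have := Q4 (ham (Fin.tail q) (Fin.tail p)) (Fin.tail q) (Fin.tail p) rfl
          have := dc G (F' (Fin.tail p)) (M (Fin.tail q))
          have := ham_comm (Fin.tail p) (Fin.tail q)
          omega
      | true =>
        cases hq : q 0 with
        | false =>
          rw [hp, hq, if_neg (fun h => Bool.noConfusion h : (true : Bool) ≠ false)] at hhc
          rw [if_pos rfl, if_neg Bool.false_ne_true]
          have := Q4 (ham (Fin.tail p) (Fin.tail q)) (Fin.tail p) (Fin.tail q) rfl
          omega
        | true =>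
          rw [hp, hq, if_pos rfl] at hhc
          rw [if_pos rfl, if_pos rfl, Q3]
          omega

/-- From a cube isomorphism, a normalized parametrisation whose zero vertex is
farthest from `z`. -/
lemma cube_map {n : ℕ} {s : Finset V}
    (φ : (G.induce (↑s : Set V)) ≃g cubeGraph n) :
    ∃ F : (Fin n → Bool) → V,
      (∀ a, a ∈ s ↔ ∃ x, F x = a) ∧
      Function.Injective F ∧
      (∀ x y, G.Adj (F x) (F y) ↔ ham x y = 1) ∧
      (∀ x, G.dist z (F x) + ham x (fun _ => false)
        = G.dist z (F (fun _ => false))) := by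
  classical
  let F0 : (Fin n → Bool) → V := fun x => ((φ.symm x : (↑s : Set V)) : V)
  have hF0adj : ∀ x y, G.Adj (F0 x) (F0 y) ↔ (cubeGraph n).Adj x y := by
    intro x y
    have h1 : (G.induce (↑s : Set V)).Adj (φ.symm x) (φ.symm y) ↔ (cubeGraph n).Adj x y :=
      φ.symm.map_adj_iff
    rw [← h1]
    exact Iff.symm (SimpleGraph.comap_adj)
  have hF0inj : Function.Injective F0 := by
    intro x y hxy
    have := Subtype.ext hxy
    exact φ.symm.injective this
  have hF0mem : ∀ x, F0 x ∈ s := fun x => (φ.symm x).2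
  have hF0surj : ∀ a, a ∈ s → ∃ x, F0 x = a := by
    intro a ha
    exact ⟨φ ⟨a, ha⟩, by simp [F0]⟩
  obtain ⟨t, -, htmax⟩ := Finset.exists_max_image (Finset.univ : Finset (Fin n → Bool))
    (fun x => G.dist z (F0 x)) ⟨(fun _ => false), Finset.mem_univ _⟩
  let F : (Fin n → Bool) → V := fun x => F0 (fun i => xor (x i) (t i))
  have hxorinj : Function.Injective (fun (x : Fin n → Bool) => (fun i => xor (x i) (t i))) := by
    intro x y hxy
    funext i
    have h2 : xor (x i) (t i) = xor (y i) (t i) := congrFun hxy i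
    cases hx : x i <;> cases hy : y i <;> cases ht : t i <;>
        rw [hx, hy, ht] at h2 <;> revert h2 <;> decide
  have hxorham : ∀ x y : Fin n → Bool,
      ham (fun i => xor (x i) (t i)) (fun i => xor (y i) (t i)) = ham x y := by
    intro x y
    unfold ham
    refine Finset.sum_congr rfl fun i _ => ?_
    cases hx : x i <;> cases hy : y i <;> cases ht : t i <;> simp [hx, hy, ht]
  have hF0t : F (fun _ => false) = F0 t := by
    show F0 _ = F0 t
    congr 1
    funext i
    simp
  have hFadj : ∀ x y, G.Adj (F x) (F y) ↔ ham x y = 1 := by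
    intro x y
    rw [show F x = F0 (fun i => xor (x i) (t i)) from rfl,
      show F y = F0 (fun i => xor (y i) (t i)) from rfl, hF0adj, cube_adj_iff, hxorham]
  have hFinj : Function.Injective F := fun x y h => hxorinj (hF0inj h)
  have hFmax : ∀ x, G.dist z (F x) ≤ G.dist z (F (fun _ => false)) := by
    intro x
    rw [hF0t]
    exact htmax _ (Finset.mem_univ _)
  have key : ∀ k (x : Fin n → Bool), ham x (fun _ => false) = k →
      G.dist z (F x) + k = G.dist z (F (fun _ => false)) := by
    intro k
    induction k using Nat.strong_induction_on with
    | _ k IHk =>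
      intro x hx
      match k, hx with
      | 0, hx => rw [ham_eq_zero hx]; omega
      | 1, hx =>
        have hadj : G.Adj (F x) (F (fun _ => false)) := (hFadj _ _).mpr hx
        have hle := hFmax x
        rcases dicho hc hmed hadj z with h | h <;> omega
      | (r+2), hx =>
        obtain ⟨i, j, hij, hi, hj⟩ :=
          exists_two_diff (x := x) (y := fun _ => false) (by omega)
        have e1 : ham (fflip x i) (fun _ => false) = r + 1 := by
          have := ham_flip_ne x (fun _ => false) i hi; omega
        have e2 : ham (fflip x j) (fun _ => false) = r + 1 := by
          have := ham_flip_ne x (fun _ => false) j hj; omega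
        have hj' : (fflip x i) j = x j := fflip_other x (fun hl => hij hl.symm)
        have e12 : ham (fflip (fflip x i) j) (fun _ => false) = r := by
          have := ham_flip_ne (fflip x i) (fun _ => false) j (by rw [hj']; exact hj)
          omega
        have A1 : G.Adj (F x) (F (fflip x i)) := by
          rw [hFadj]
          have := ham_fflip_self x i
          have := ham_comm x (fflip x i)
          omega
        have A2 : G.Adj (F (fflip x i)) (F (fflip (fflip x i) j)) := by
          rw [hFadj]
          have := ham_fflip_self (fflip x i) j
          have := ham_comm (fflip x i) (fflip (fflip x i) j)
          omega
        have A3 : G.Adj (F (fflip (fflip x i) j)) (F (fflip x j)) := by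
          rw [hFadj, fflip_comm x hij]
          exact ham_fflip_self (fflip x j) i
        have A4 : G.Adj (F (fflip x j)) (F x) := by
          rw [hFadj]
          exact ham_fflip_self x j
        have hham2 : ham x (fflip (fflip x i) j) = 2 := by
          have := ham_flip_eq (fflip x i) x j hj'
          have := ham_fflip_self x i
          have := ham_comm x (fflip (fflip x i) j)
          omega
        have hham2' : ham (fflip x i) (fflip x j) = 2 := by
          have hyi : x i = (fflip x j) i := (fflip_other x hij).symm
          have := ham_flip_eq x (fflip x j) i hyi
          have := ham_fflip_self x j
          have := ham_comm x (fflip x j)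
          omega
        have hne1 : F x ≠ F (fflip (fflip x i) j) := by
          intro h
          have := hFinj h
          rw [← this, ham_self] at hham2
          omega
        have hne2 : F (fflip x i) ≠ F (fflip x j) := by
          intro h
          have := hFinj h
          rw [← this, ham_self] at hham2'
          omega
        have hsq := sq_mod hc hmed z A1 A2 A3.symm.symm A4 hne1 hne2
        have I1 := IHk (r+1) (by omega) (fflip x i) e1
        have I2 := IHk (r+1) (by omega) (fflip x j) e2
        have I12 := IHk r (by omega) (fflip (fflip x i) j) e12
        omega
  refine ⟨F, ?_, hFinj, hFadj, fun x => key _ x rfl⟩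
  intro a
  constructor
  · intro ha
    obtain ⟨x, hx⟩ := hF0surj a ha
    refine ⟨fun i => xor (x i) (t i), ?_⟩
    show F0 _ = a
    rw [← hx]
    congr 1
    funext i
    beta_reduce
    cases hx' : x i <;> cases ht : t i <;> simp [hx', ht]
  · rintro ⟨x, rfl⟩
    exact hF0mem _

omit hc hmed in
lemma unit_inj {n : ℕ} {i j : Fin n}
    (h : fflip (fun _ => false) i = fflip (fun _ => false) j) : i = j := by
  by_contra hij
  have h1 : fflip (fun _ : Fin n => false) i i = true := by rw [fflip_val]; rfl
  have h2 : fflip (fun _ : Fin n => false) j i = false := fflip_other _ hij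
  rw [h, h2] at h1
  exact Bool.noConfusion h1

/-- Rigidity: two cubes with the same top vertex and the same downward neighbours
of the top coincide. -/
lemma rigid [DecidableEq V] {n : ℕ} {F1 F2 : (Fin n → Bool) → V}
    (h1inj : Function.Injective F1) (h2inj : Function.Injective F2)
    (h1adj : ∀ x y, ham x y = 1 → G.Adj (F1 x) (F1 y))
    (h2adj : ∀ x y, ham x y = 1 → G.Adj (F2 x) (F2 y))
    (h1lev : ∀ x, G.dist z (F1 x) + ham x (fun _ => false)
      = G.dist z (F1 (fun _ => false)))
    (h2lev : ∀ x, G.dist z (F2 x) + ham x (fun _ => false)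
      = G.dist z (F2 (fun _ => false)))
    (h0 : F1 (fun _ => false) = F2 (fun _ => false))
    (hS : Finset.univ.image (fun i => F1 (fflip (fun _ => false) i))
        = Finset.univ.image (fun i => F2 (fflip (fun _ => false) i))) :
    Finset.univ.image F1 = Finset.univ.image F2 := by
  classical
  have hgex : ∀ i : Fin n, ∃ j, F1 (fflip (fun _ => false) j) = F2 (fflip (fun _ => false) i) := by
    intro i
    have : F2 (fflip (fun _ => false) i) ∈
        Finset.univ.image (fun i => F1 (fflip (fun _ => false) i)) := by
      rw [hS]
      exact Finset.mem_image_of_mem _ (Finset.mem_univ i)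
    obtain ⟨j, -, hj⟩ := Finset.mem_image.mp this
    exact ⟨j, hj⟩
  choose g hg using hgex
  have hginj : Function.Injective g := by
    intro i i' hii
    have : F2 (fflip (fun _ => false) i) = F2 (fflip (fun _ => false) i') := by
      rw [← hg i, ← hg i', hii]
    exact unit_inj (h2inj this)
  have hgbij : Function.Bijective g :=
    ⟨hginj, Finite.surjective_of_injective hginj⟩
  let π : Fin n ≃ Fin n := Equiv.ofBijective g hgbij
  have hπ : ∀ i, π i = g i := fun i => rfl
  have hamσ : ∀ x y : Fin n → Bool, ham (x ∘ π.symm) (y ∘ π.symm) = ham x y := by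
    intro x y
    unfold ham
    exact Equiv.sum_comp π.symm (fun i => if x i = y i then 0 else 1)
  have hzvσ : ((fun _ : Fin n => false) ∘ π.symm) = (fun _ : Fin n => false) := rfl
  have hamσz : ∀ x : Fin n → Bool,
      ham (x ∘ π.symm) (fun _ => false) = ham x (fun _ => false) := by
    intro x
    have := hamσ x (fun _ => false)
    rwa [hzvσ] at this
  have hunitσ : ∀ i, (fflip (fun _ => false) i) ∘ π.symm = fflip (fun _ => false) (g i) := by
    intro i
    funext j
    show (fflip (fun _ => false) i) (π.symm j) = _
    by_cases hj : j = g i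
    · subst hj
      have : π.symm (π i) = i := π.symm_apply_apply i
      rw [hπ] at this
      rw [this, fflip_val, fflip_val]
    · have hne : π.symm j ≠ i := by
        intro hq
        apply hj
        rw [← hπ, ← hq, π.apply_symm_apply]
      rw [fflip_other _ hne, fflip_other _ hj]
  have hK : G.dist z (F1 (fun _ => false)) = G.dist z (F2 (fun _ => false)) := by rw [h0]
  have K : ∀ k (x : Fin n → Bool), ham x (fun _ => false) = k →
      F2 x = F1 (x ∘ π.symm) := by
    intro k
    induction k using Nat.strong_induction_on with
    | _ k IHk =>
      intro x hx
      match k, hx with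
      | 0, hx =>
        have hx0 : x = fun _ => false := ham_eq_zero hx
        subst hx0
        exact h0.symm
      | 1, hx =>
        obtain ⟨i, -, hxe⟩ := eq_fflip_of_ham_eq_one hx
        subst hxe
        rw [hunitσ]
        exact (hg i).symm
      | (r+2), hx =>
        obtain ⟨i, j, hij, hi, hj⟩ :=
          exists_two_diff (x := x) (y := fun _ => false) (by omega)
        have e1 : ham (fflip x i) (fun _ => false) = r + 1 := by
          have := ham_flip_ne x (fun _ => false) i hi; omega
        have e2 : ham (fflip x j) (fun _ => false) = r + 1 := by
          have := ham_flip_ne x (fun _ => false) j hj; omega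
        have hj' : (fflip x i) j = x j := fflip_other x (fun hl => hij hl.symm)
        have e12 : ham (fflip (fflip x i) j) (fun _ => false) = r := by
          have := ham_flip_ne (fflip x i) (fun _ => false) j (by rw [hj']; exact hj)
          omega
        have I1 := IHk (r+1) (by omega) (fflip x i) e1
        have I2 := IHk (r+1) (by omega) (fflip x j) e2
        have I12 := IHk r (by omega) (fflip (fflip x i) j) e12
        -- hamming facts
        have m1 : ham (fflip (fflip x i) j) (fflip x i) = 1 := ham_fflip_self (fflip x i) j
        have m2 : ham (fflip (fflip x i) j) (fflip x j) = 1 := by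
          rw [fflip_comm x hij]
          exact ham_fflip_self (fflip x j) i
        have m3 : ham (fflip x i) x = 1 := ham_fflip_self x i
        have m4 : ham (fflip x j) x = 1 := ham_fflip_self x j
        have m5 : ham (fflip x i) (fflip x j) = 2 := by
          have hyi : x i = (fflip x j) i := (fflip_other x hij).symm
          have := ham_flip_eq x (fflip x j) i hyi
          have := ham_comm x (fflip x j)
          omega
        have hne : F2 (fflip x i) ≠ F2 (fflip x j) := by
          intro h
          have := h2inj h
          rw [← this, ham_self] at m5
          omega
        refine quad_unique hc hmed z (u := F2 (fflip (fflip x i) j))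
          (h2adj _ _ m1) (h2adj _ _ m2) hne ?_ ?_
          ⟨h2adj _ _ m3, h2adj _ _ m4, ?_⟩
          ⟨?_, ?_, ?_⟩
        · have := h2lev (fflip x i)
          have := h2lev (fflip (fflip x i) j)
          omega
        · have := h2lev (fflip x j)
          have := h2lev (fflip (fflip x i) j)
          omega
        · have := h2lev x
          have := h2lev (fflip x i)
          omega
        · rw [I1]
          exact h1adj _ _ (by rw [hamσ]; exact m3)
        · rw [I2]
          exact h1adj _ _ (by rw [hamσ]; exact m4)
        · have l1 := h1lev (x ∘ π.symm)
          rw [hamσz x] at l1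
          have l2 := h2lev (fflip x i)
          omega
  ext a
  simp only [Finset.mem_image, Finset.mem_univ, true_and]
  constructor
  · rintro ⟨x, rfl⟩
    refine ⟨x ∘ π, ?_⟩
    rw [K (ham (x ∘ π) (fun _ => false)) (x ∘ π) rfl]
    congr 1
    funext l
    show x (π (π.symm l)) = x l
    rw [π.apply_symm_apply]
  · rintro ⟨x, rfl⟩
    exact ⟨x ∘ π.symm, (K (ham x (fun _ => false)) x rfl).symm⟩

lemma count_cubes [Fintype V] [DecidableEq V] (n : ℕ) :
    Nat.card {s : Finset V // Nonempty ((G.induce (↑s : Set V)) ≃g cubeGraph n)}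
      = ∑ u : V, Nat.choose
          (Nat.card {w : V // G.Adj u w ∧ G.dist z w + 1 = G.dist z u}) n := by
  classical
  have h1 : Nat.card {s : Finset V // Nonempty ((G.induce (↑s : Set V)) ≃g cubeGraph n)}
      = (Finset.univ.filter
          (fun s : Finset V => Nonempty ((G.induce (↑s : Set V)) ≃g cubeGraph n))).card := by
    rw [Nat.card_eq_fintype_card, Fintype.card_subtype]
  have h2 : ∀ u : V, Nat.card {w : V // G.Adj u w ∧ G.dist z w + 1 = G.dist z u}
      = (Finset.univ.filter (fun w => G.Adj u w ∧ G.dist z w + 1 = G.dist z u)).card := by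
    intro u
    rw [Nat.card_eq_fintype_card, Fintype.card_subtype]
  simp only [h2]
  rw [h1]
  -- the top-vertex function
  have htfex : ∃ tf : Finset V → V, ∀ s : Finset V, s.Nonempty →
      tf s ∈ s ∧ ∀ b ∈ s, G.dist z b ≤ G.dist z (tf s) := by
    refine ⟨fun s => if h : s.Nonempty then
      (Finset.exists_max_image s (fun a => G.dist z a) h).choose else z, fun s hs => ?_⟩
    have hspec := (Finset.exists_max_image s (fun a => G.dist z a) hs).choose_spec
    simp only [dif_pos hs]
    exact hspec
  obtain ⟨tf, htf1⟩ := htfex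
  -- analysis of a single cube
  have hcube : ∀ s : Finset V, Nonempty ((G.induce (↑s : Set V)) ≃g cubeGraph n) →
      ∃ F : (Fin n → Bool) → V,
      (∀ a, a ∈ s ↔ ∃ x, F x = a) ∧ Function.Injective F ∧
      (∀ x y, G.Adj (F x) (F y) ↔ ham x y = 1) ∧
      (∀ x, G.dist z (F x) + ham x (fun _ => false) = G.dist z (F (fun _ => false))) ∧
      tf s = F (fun _ => false) ∧
      s.filter (fun w => G.Adj (F (fun _ => false)) w)
        = Finset.univ.image (fun i => F (fflip (fun _ => false) i)) := by
    intro s hs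
    obtain ⟨φ⟩ := hs
    obtain ⟨F, hmem, hinj, hadj, hlevF⟩ := cube_map hc hmed z φ
    have hzin : F (fun _ => false) ∈ s := (hmem _).mpr ⟨_, rfl⟩
    have hne : s.Nonempty := ⟨_, hzin⟩
    have htop := htf1 s hne
    have htfeq : tf s = F (fun _ => false) := by
      obtain ⟨x0, hx0⟩ := (hmem (tf s)).mp htop.1
      have hle := htop.2 _ hzin
      rw [← hx0] at hle ⊢
      have := hlevF x0
      have hx00 : ham x0 (fun _ => false) = 0 := by omega
      rw [ham_eq_zero hx00]
    refine ⟨F, hmem, hinj, hadj, hlevF, htfeq, ?_⟩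
    ext a
    simp only [Finset.mem_filter, Finset.mem_image, Finset.mem_univ, true_and]
    constructor
    · rintro ⟨ha, hadja⟩
      obtain ⟨x, rfl⟩ := (hmem a).mp ha
      have hh1 : ham (fun _ => false) x = 1 := (hadj _ _).mp hadja
      have hh2 : ham x (fun _ => false) = 1 := by rw [ham_comm]; exact hh1
      obtain ⟨i, -, hxe⟩ := eq_fflip_of_ham_eq_one hh2
      exact ⟨i, by rw [← hxe]⟩
    · rintro ⟨i, rfl⟩
      refine ⟨(hmem _).mpr ⟨_, rfl⟩, (hadj _ _).mpr ?_⟩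
      rw [ham_comm]
      exact ham_fflip_self _ _
  rw [Finset.card_eq_sum_card_fiberwise (f := tf) (t := Finset.univ)
    (fun s _ => Finset.mem_univ _)]
  refine Finset.sum_congr rfl fun u _ => ?_
  rw [← Finset.card_powersetCard n (Finset.univ.filter
    (fun w => G.Adj u w ∧ G.dist z w + 1 = G.dist z u))]
  refine Finset.card_bij (fun s _ => s.filter (fun w => G.Adj u w)) ?_ ?_ ?_
  · -- maps into powersetCard
    intro s hsmem
    rw [Finset.mem_filter] at hsmem
    obtain ⟨hsf, hstf⟩ := hsmem
    rw [Finset.mem_filter] at hsf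
    obtain ⟨F, hmem, hinj, hadj, hlevF, htfeq, hfilt⟩ := hcube s hsf.2
    have hu : u = F (fun _ => false) := by rw [← hstf, htfeq]
    subst hu
    rw [Finset.mem_powersetCard]
    constructor
    · intro a ha
      rw [Finset.mem_filter] at ha
      have ha' : a ∈ s.filter (fun w => G.Adj (F (fun _ => false)) w) :=
        Finset.mem_filter.mpr ha
      rw [hfilt] at ha'
      obtain ⟨i, -, rfl⟩ := Finset.mem_image.mp ha'
      rw [Finset.mem_filter]
      refine ⟨Finset.mem_univ _, ?_, ?_⟩
      · exact (hadj _ _).mpr (by rw [ham_comm]; exact ham_fflip_self _ _)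
      · have := hlevF (fflip (fun _ => false) i)
        have h1 := ham_fflip_self (fun _ : Fin n => false) i
        omega
    · show (s.filter (fun w => G.Adj (F (fun _ => false)) w)).card = n
      rw [hfilt,
        Finset.card_image_of_injective _ (fun i j h => unit_inj (hinj h))]
      simp
  · -- injectivity
    intro s1 hs1 s2 hs2 hfeq
    rw [Finset.mem_filter] at hs1 hs2
    obtain ⟨hsf1, hstf1⟩ := hs1
    obtain ⟨hsf2, hstf2⟩ := hs2
    rw [Finset.mem_filter] at hsf1 hsf2
    obtain ⟨F1, hmem1, hinj1, hadj1, hlev1, htfeq1, hfilt1⟩ := hcube s1 hsf1.2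
    obtain ⟨F2, hmem2, hinj2, hadj2, hlev2, htfeq2, hfilt2⟩ := hcube s2 hsf2.2
    have h00 : F1 (fun _ => false) = F2 (fun _ => false) := by
      rw [← htfeq1, ← htfeq2, hstf1, hstf2]
    have hu1 : u = F1 (fun _ => false) := by rw [← hstf1, htfeq1]
    have hu2 : u = F2 (fun _ => false) := by rw [← hstf2, htfeq2]
    have e1 : s1.filter (fun w => G.Adj u w)
        = Finset.univ.image (fun i => F1 (fflip (fun _ => false) i)) :=
      (Finset.filter_congr (fun x _ => by rw [hu1])).trans hfilt1
    have e2 : s2.filter (fun w => G.Adj u w)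
        = Finset.univ.image (fun i => F2 (fflip (fun _ => false) i)) :=
      (Finset.filter_congr (fun x _ => by rw [hu2])).trans hfilt2
    have hfeq' : s1.filter (fun w => G.Adj u w) = s2.filter (fun w => G.Adj u w) := hfeq
    have hS : Finset.univ.image (fun i => F1 (fflip (fun _ => false) i))
        = Finset.univ.image (fun i => F2 (fflip (fun _ => false) i)) := by
      rw [← e1, ← e2, hfeq']
    have himg := rigid hc hmed z hinj1 hinj2
      (fun x y h => (hadj1 x y).mpr h) (fun x y h => (hadj2 x y).mpr h)
      hlev1 hlev2 h00 hS
    ext a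
    rw [show (a ∈ s1) = (a ∈ Finset.univ.image F1) from propext (by
      simp only [Finset.mem_image, Finset.mem_univ, true_and]; exact hmem1 a),
      show (a ∈ s2) = (a ∈ Finset.univ.image F2) from propext (by
      simp only [Finset.mem_image, Finset.mem_univ, true_and]; exact hmem2 a), himg]
  · -- surjectivity
    intro S hS
    rw [Finset.mem_powersetCard] at hS
    obtain ⟨hsub, hcard⟩ := hS
    have eqv := Finset.equivFinOfCardEq hcard
    have heS : ∀ i : Fin n, ((eqv.symm i : {x // x ∈ S}) : V) ∈ S := fun i => (eqv.symm i).2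
    have he : ∀ i : Fin n, G.Adj u ((eqv.symm i : {x // x ∈ S}) : V) ∧
        G.dist z ((eqv.symm i : {x // x ∈ S}) : V) + 1 = G.dist z u := by
      intro i
      have := hsub (heS i)
      rw [Finset.mem_filter] at this
      exact this.2
    have heinj : Function.Injective (fun i : Fin n => ((eqv.symm i : {x // x ∈ S}) : V)) := by
      intro i j hij
      exact eqv.symm.injective (Subtype.ext hij)
    obtain ⟨F, hF0, hFE, hFlev, hFiso⟩ := build hc hmed z u _ heinj he
    have hFinj : Function.Injective F := by
      intro a b hab
      have hd := hFiso a b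
      rw [hab, SimpleGraph.dist_self] at hd
      exact ham_eq_zero hd.symm
    have hFadj : ∀ x y, G.Adj (F x) (F y) ↔ ham x y = 1 := by
      intro x y
      constructor
      · intro h
        rw [← hFiso]
        exact da h
      · intro h
        exact SimpleGraph.dist_eq_one_iff_adj.mp (by rw [hFiso, h])
    refine ⟨Finset.univ.image F, ?_, ?_⟩
    · -- membership in the fiber
      have hmemF : ∀ x, F x ∈ Finset.univ.image F :=
        fun x => Finset.mem_image_of_mem F (Finset.mem_univ x)
      have hcubeF : Nonempty ((G.induce (↑(Finset.univ.image F) : Set V)) ≃g cubeGraph n) := by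
        have fbij : Function.Bijective (fun x : Fin n → Bool =>
            (⟨F x, Finset.mem_coe.mpr (hmemF x)⟩ :
              (↑(Finset.univ.image F) : Set V))) := by
          constructor
          · intro a b hab
            exact hFinj (congrArg Subtype.val hab)
          · rintro ⟨b, hb⟩
            obtain ⟨x, -, hx⟩ := Finset.mem_image.mp (Finset.mem_coe.mp hb)
            exact ⟨x, Subtype.ext hx⟩
        refine ⟨(SimpleGraph.Iso.symm ⟨Equiv.ofBijective _ fbij, ?_⟩)⟩
        intro a b
        show (G.induce (↑(Finset.univ.image F) : Set V)).Adj _ _ ↔ (cubeGraph n).Adj a b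
        rw [cube_adj_iff, ← hFadj]
        exact SimpleGraph.comap_adj
      have htfF : tf (Finset.univ.image F) = u := by
        have hu : u ∈ Finset.univ.image F := hF0 ▸ hmemF _
        have htop := htf1 _ ⟨u, hu⟩
        obtain ⟨x0, -, hx0⟩ := Finset.mem_image.mp htop.1
        have hle := htop.2 _ hu
        rw [← hx0] at hle ⊢
        have h1 := hFlev x0
        rw [← hF0] at hle
        have h2 := hFlev (fun _ => false)
        rw [ham_self] at h2
        have hx00 : ham x0 (fun _ => false) = 0 := by omega
        rw [ham_eq_zero hx00, hF0]
      rw [Finset.mem_filter, Finset.mem_filter]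
      exact ⟨⟨Finset.mem_univ _, hcubeF⟩, htfF⟩
    · -- the filter recovers S
      ext a
      simp only [Finset.mem_filter, Finset.mem_image, Finset.mem_univ, true_and]
      constructor
      · rintro ⟨⟨x, rfl⟩, hadja⟩
        have h1 : ham x (fun _ => false) = 1 := by
          have hd : G.dist (F (fun _ => false)) (F x) = 1 := by
            rw [hF0]
            exact da hadja
          rw [hFiso] at hd
          rw [ham_comm]
          exact hd
        obtain ⟨i, -, hxe⟩ := eq_fflip_of_ham_eq_one h1
        rw [hxe, hFE]
        exact heS i
      · intro ha
        refine ⟨⟨fflip (fun _ => false) (eqv ⟨a, ha⟩), ?_⟩, ?_⟩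
        · rw [hFE]
          show ((eqv.symm (eqv ⟨a, ha⟩) : {x // x ∈ S}) : V) = a
          rw [Equiv.symm_apply_apply]
        · have h3 := (he (eqv ⟨a, ha⟩)).1
          have hh : ((eqv.symm (eqv ⟨a, ha⟩) : {x // x ∈ S}) : V) = a := by
            rw [Equiv.symm_apply_apply]
          rw [hh] at h3
          exact h3

end MG

/-- Euler formula for finite median graphs: the alternating sum of the numbers
of `n`-cubes equals 1. -/
theorem stmt_19 (G : SimpleGraph V) [Fintype V] (hconn : G.Connected)
    (hmed : ∀ u v w : V, ∃! m : V,
        m ∈ gInterval G u v ∧ m ∈ gInterval G v w ∧ m ∈ gInterval G w u) :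
    ∑ n ∈ Finset.range (Fintype.card V + 1),
        (-1 : ℤ) ^ n * (numCubes G n : ℤ) = 1 := by
  classical
  obtain ⟨z⟩ := hconn.nonempty
  obtain ⟨c, hcdef⟩ : ∃ c : V → ℕ, ∀ u : V,
      c u = Nat.card {w : V // G.Adj u w ∧ G.dist z w + 1 = G.dist z u} :=
    ⟨_, fun u => rfl⟩
  have hcnt : ∀ n, numCubes G n = ∑ u : V, Nat.choose (c u) n := by
    intro n
    rw [numCubes, MG.count_cubes hconn hmed z n]
    exact Finset.sum_congr rfl fun u _ => by rw [hcdef]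
  have hle : ∀ u : V, c u ≤ Fintype.card V := by
    intro u
    rw [hcdef, Nat.card_eq_fintype_card]
    exact Fintype.card_subtype_le _
  have hzero : ∀ u : V, c u = 0 ↔ u = z := by
    intro u
    rw [hcdef, Nat.card_eq_fintype_card, Fintype.card_eq_zero_iff]
    constructor
    · intro h
      by_contra hne
      have hd : G.dist z u ≠ 0 := fun h0 => hne (hconn.dist_eq_zero_iff.mp h0).symm
      obtain ⟨p, hp1, hp2⟩ := MG.downstep hconn hd
      exact h.false ⟨p, hp1, hp2⟩
    · rintro rfl
      constructor
      rintro ⟨w, -, hw2⟩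
      rw [SimpleGraph.dist_self] at hw2
      omega
  calc ∑ n ∈ Finset.range (Fintype.card V + 1), (-1 : ℤ) ^ n * (numCubes G n : ℤ)
      = ∑ n ∈ Finset.range (Fintype.card V + 1),
          ∑ u : V, (-1 : ℤ) ^ n * (Nat.choose (c u) n : ℤ) := by
        refine Finset.sum_congr rfl fun n _ => ?_
        rw [hcnt n]
        push_cast
        rw [Finset.mul_sum]
    _ = ∑ u : V, ∑ n ∈ Finset.range (Fintype.card V + 1),
          (-1 : ℤ) ^ n * (Nat.choose (c u) n : ℤ) := Finset.sum_comm
    _ = ∑ u : V, (if u = z then (1 : ℤ) else 0) := by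
        refine Finset.sum_congr rfl fun u _ => ?_
        have h1 : ∑ n ∈ Finset.range (Fintype.card V + 1),
            (-1 : ℤ) ^ n * (Nat.choose (c u) n : ℤ)
            = ∑ n ∈ Finset.range (c u + 1), (-1 : ℤ) ^ n * (Nat.choose (c u) n : ℤ) := by
          refine (Finset.sum_subset (Finset.range_subset_range.mpr (by have := hle u; omega)) ?_).symm
          intro x _ hx2
          rw [Finset.mem_range, not_lt] at hx2
          rw [Nat.choose_eq_zero_of_lt (by omega)]
          ring
        rw [h1, Int.alternating_sum_range_choose]
        by_cases hcu : c u = 0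
        · rw [if_pos hcu, if_pos ((hzero u).mp hcu)]
        · rw [if_neg hcu, if_neg (fun h => hcu ((hzero u).mpr h))]
    _ = 1 := by
        rw [Finset.sum_ite_eq' Finset.univ z (fun _ => (1 : ℤ))]
        simp
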